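/- If 𝔽 and 𝔊 are maximal closed isotropic generalized flags in V (symplectic form) with St_𝔽 ⊆ St_𝔊 in 𝔰𝔭(V), then ⋃_{F∈𝔽} F = ⋃_{G∈𝔊} G; in fact 𝔽 = 𝔊, so the map 𝔽 ↦ St_𝔽 from maximal closed isotropic generalized flags in V to Borel subalgebras of 𝔰𝔭(V) is injective. -/

import Mathlib

attribute [local instance 100] LieRing.ofAssociativeRing

/-- The perpendicular complement of a subspace of `V` with respect to a
bilinear form `B` on `V`. -/
def perp {V : Type*} [AddCommGroup V] [Module ℂ V]
    (B : V →ₗ[ℂ] V →ₗ[ℂ] ℂ) (F : Submodule ℂ V) : Submodule ℂ V where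
  carrier := {y | ∀ x ∈ F, B x y = 0}
  add_mem' := by intro a b ha hb x hx; simp [map_add, ha x hx, hb x hx]
  zero_mem' := by intro x hx; simp
  smul_mem' := by intro c a ha x hx; simp [ha x hx]

/-- The Lie algebra of finite-rank endomorphisms of `V` that are skew-adjoint
with respect to `B`.  For a nondegenerate symmetric form this is
`𝔰𝔬(V) = ⋀²V`, and for a nondegenerate antisymmetric form it is
`𝔰𝔭(V) = Sym²(V)`, both inside `𝔤𝔩(V,V)`. -/
def skewFR {V : Type*} [AddCommGroup V] [Module ℂ V]
    (B : V →ₗ[ℂ] V →ₗ[ℂ] ℂ) : LieSubalgebra ℂ (Module.End ℂ V) where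
  carrier := {f | (∃ s : Set V, s.Finite ∧ LinearMap.range f ≤ Submodule.span ℂ s) ∧
    ∀ x y : V, B (f x) y = - B x (f y)}
  add_mem' := by
    rintro f g ⟨⟨s, hsf, hs⟩, hf⟩ ⟨⟨t, htf, ht⟩, hg⟩
    refine ⟨⟨s ∪ t, hsf.union htf, ?_⟩, fun x y => ?_⟩
    · rintro v ⟨x, rfl⟩
      have h1 : f x ∈ Submodule.span ℂ (s ∪ t) :=
        Submodule.span_mono Set.subset_union_left (hs ⟨x, rfl⟩)
      have h2 : g x ∈ Submodule.span ℂ (s ∪ t) :=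
        Submodule.span_mono Set.subset_union_right (ht ⟨x, rfl⟩)
      simpa [LinearMap.add_apply] using add_mem h1 h2
    · simp only [LinearMap.add_apply, map_add, LinearMap.add_apply, hf x y, hg x y]
      ring
  zero_mem' := by
    exact ⟨⟨∅, Set.finite_empty, by simp [LinearMap.range_zero]⟩, by simp⟩
  smul_mem' := by
    rintro c f ⟨⟨s, hsf, hs⟩, hf⟩
    refine ⟨⟨s, hsf, ?_⟩, fun x y => ?_⟩
    · rintro v ⟨x, rfl⟩
      simpa [LinearMap.smul_apply] using Submodule.smul_mem _ c (hs ⟨x, rfl⟩)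
    · simp only [LinearMap.smul_apply, map_smul, LinearMap.smul_apply, smul_eq_mul, hf x y]
      ring
  lie_mem' := by
    rintro f g ⟨⟨s, hsf, hs⟩, hf⟩ ⟨⟨t, htf, ht⟩, hg⟩
    have hbr : ∀ x : V, ⁅f, g⁆ x = f (g x) - g (f x) := by
      intro x
      rw [LieRing.of_associative_ring_bracket]
      simp [LinearMap.sub_apply, Module.End.mul_apply]
    constructor
    · refine ⟨s ∪ t, hsf.union htf, ?_⟩
      rintro v ⟨x, rfl⟩
      have h1 : f (g x) ∈ Submodule.span ℂ (s ∪ t) :=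
        Submodule.span_mono Set.subset_union_left (hs ⟨g x, rfl⟩)
      have h2 : g (f x) ∈ Submodule.span ℂ (s ∪ t) :=
        Submodule.span_mono Set.subset_union_right (ht ⟨f x, rfl⟩)
      rw [hbr]
      exact sub_mem h1 h2
    · intro x y
      rw [hbr, hbr]
      simp only [map_sub, LinearMap.sub_apply, map_sub, hf, hg]
      ring

/-- A Lie subalgebra is locally solvable if every finite subset of it is
contained in a solvable subalgebra (itself contained in the given one). -/
def LocallySolvable {L : Type*} [LieRing L] [LieAlgebra ℂ L]
    (b : LieSubalgebra ℂ L) : Prop :=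
  ∀ T : Finset L, (↑T : Set L) ⊆ (b : Set L) →
    ∃ K : LieSubalgebra ℂ L, (K : Set L) ⊆ (b : Set L) ∧
      LieAlgebra.IsSolvable K ∧ (↑T : Set L) ⊆ (K : Set L)

/-- A Borel subalgebra of `g`: a maximal locally solvable subalgebra of `g`. -/
def IsBorelIn {L : Type*} [LieRing L] [LieAlgebra ℂ L]
    (g b : LieSubalgebra ℂ L) : Prop :=
  b ≤ g ∧ LocallySolvable b ∧
    ∀ c : LieSubalgebra ℂ L, c ≤ g → LocallySolvable c → b ≤ c → c = b

/-- A subspace `N` of `V` is stable under a family `b` of endomorphisms. -/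
def StableUnder {V : Type*} [AddCommGroup V] [Module ℂ V]
    (b : LieSubalgebra ℂ (Module.End ℂ V)) (N : Submodule ℂ V) : Prop :=
  ∀ f ∈ b, ∀ x ∈ N, f x ∈ N

/-- `F` and `G` form an immediate predecessor-successor pair of the chain `C`. -/
def ImmPair {V : Type*} [AddCommGroup V] [Module ℂ V]
    (C : Set (Submodule ℂ V)) (F G : Submodule ℂ V) : Prop :=
  F ∈ C ∧ G ∈ C ∧ F < G ∧ ∀ H ∈ C, ¬(F < H ∧ H < G)

/-- A maximal closed isotropic generalized flag in `V`: a generalized flag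
consisting of isotropic subspaces (a generalized flag in its union), closed
(every immediate successor is closed and the closure of each immediate
predecessor is itself or its successor), with every good pair of codimension
one, whose union is a maximal isotropic subspace of `V`. -/
def IsMaxClosedIsoFlag {V : Type*} [AddCommGroup V] [Module ℂ V]
    (B : V →ₗ[ℂ] V →ₗ[ℂ] ℂ) (C : Set (Submodule ℂ V)) : Prop :=
  -- all members are isotropic
  (∀ F ∈ C, F ≤ perp B F) ∧
  -- C is a generalized flag in its union
  IsChain (· ≤ ·) C ∧
  (∀ F ∈ C, (∃ G, ImmPair C G F) ∨ (∃ G, ImmPair C F G)) ∧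
  (∀ x : V, x ≠ 0 → (∃ F ∈ C, x ∈ F) →
    ∃ F G, ImmPair C F G ∧ x ∈ G ∧ x ∉ F) ∧
  -- closedness
  (∀ F G, ImmPair C F G →
    perp B (perp B G) = G ∧
      (perp B (perp B F) = F ∨ perp B (perp B F) = G)) ∧
  -- every good pair has codimension one
  (∀ F G, ImmPair C F G → perp B (perp B F) = F →
    Module.rank ℂ (↥G ⧸ (F.comap G.subtype)) = 1) ∧
  -- the union is a maximal isotropic subspace of V
  (sSup C ≤ perp B (sSup C) ∧
    ∀ P : Submodule ℂ V, P ≤ perp B P → sSup C ≤ P → P = sSup C)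

/-- The stabilizer of a family of subspaces `C` in the skew algebra
(`𝔰𝔬(V)` or `𝔰𝔭(V)`), as a subset of `End V`. -/
def skewStab {V : Type*} [AddCommGroup V] [Module ℂ V]
    (B : V →ₗ[ℂ] V →ₗ[ℂ] ℂ) (C : Set (Submodule ℂ V)) :
    Set (Module.End ℂ V) :=
  {f | f ∈ skewFR B ∧ ∀ F ∈ C, ∀ x ∈ F, f x ∈ F}

section Aux
variable {V : Type*} [AddCommGroup V] [Module ℂ V]

lemma mem_perp {B : V →ₗ[ℂ] V →ₗ[ℂ] ℂ} {F : Submodule ℂ V} {y : V} :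
    y ∈ perp B F ↔ ∀ x ∈ F, B x y = 0 := Iff.rfl

lemma perp_mono {B : V →ₗ[ℂ] V →ₗ[ℂ] ℂ} {F G : Submodule ℂ V} (h : F ≤ G) :
    perp B G ≤ perp B F := fun y hy x hx => hy x (h hx)

/-- The symmetric rank-≤2 operator `u ↦ B(u,a)z + B(u,z)a`. -/
def sym2Map (B : V →ₗ[ℂ] V →ₗ[ℂ] ℂ) (a z : V) : Module.End ℂ V :=
  ((B.flip a).smulRight z) + ((B.flip z).smulRight a)

lemma sym2Map_apply (B : V →ₗ[ℂ] V →ₗ[ℂ] ℂ) (a z u : V) :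
    sym2Map B a z u = B u a • z + B u z • a := rfl

lemma sym2Map_mem (B : V →ₗ[ℂ] V →ₗ[ℂ] ℂ) (hAlt : ∀ x y : V, B x y = - B y x)
    (a z : V) : sym2Map B a z ∈ skewFR B := by
  constructor
  · refine ⟨{z, a}, Set.toFinite _, ?_⟩
    rintro v ⟨u, rfl⟩
    exact add_mem
      (Submodule.smul_mem _ _ (Submodule.subset_span (by simp)))
      (Submodule.smul_mem _ _ (Submodule.subset_span (by simp)))
  · intro x y
    simp only [sym2Map_apply, map_add, map_smul, LinearMap.add_apply, LinearMap.smul_apply,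
      smul_eq_mul]
    rw [hAlt y a, hAlt y z, hAlt z y, hAlt a y]
    ring

/-- Membership in the sup of a chain of submodules. -/
lemma mem_chain_sSup {C : Set (Submodule ℂ V)} (hch : IsChain (· ≤ ·) C) {x : V}
    (hx : x ∈ sSup C) (hx0 : x ≠ 0) : ∃ F ∈ C, x ∈ F := by
  rcases Set.eq_empty_or_nonempty C with rfl | hne
  · rw [sSup_empty] at hx
    exact absurd (Submodule.mem_bot (R := ℂ) |>.mp hx) hx0
  · exact (Submodule.mem_sSup_of_directed hne hch.directedOn).mp hx

lemma rank_one_span {F G : Submodule ℂ V}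
    (hrk : Module.rank ℂ (↥G ⧸ (F.comap G.subtype)) = 1)
    {x : V} (hxG : x ∈ G) (hxF : x ∉ F) : G ≤ F ⊔ Submodule.span ℂ {x} := by
  set F' := F.comap G.subtype with hF'
  obtain ⟨v₀, hv₀⟩ := rank_le_one_iff.mp hrk.le
  intro g hg
  obtain ⟨r, hr⟩ := hv₀ (Submodule.Quotient.mk (⟨x, hxG⟩ : G))
  obtain ⟨s, hs⟩ := hv₀ (Submodule.Quotient.mk (⟨g, hg⟩ : G))
  have hx0 : Submodule.Quotient.mk (p := F') (⟨x, hxG⟩ : G) ≠ 0 := by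
    simpa [Submodule.Quotient.mk_eq_zero, hF', Submodule.mem_comap] using hxF
  have hr0 : r ≠ 0 := by
    rintro rfl
    rw [zero_smul] at hr
    exact hx0 hr.symm
  have hmk : Submodule.Quotient.mk (p := F') (⟨g, hg⟩ : G) =
      Submodule.Quotient.mk (p := F') ((s * r⁻¹) • (⟨x, hxG⟩ : G)) := by
    rw [Submodule.Quotient.mk_smul, ← hr, ← hs, smul_smul]
    congr 1
    field_simp
  have h2 : (⟨g, hg⟩ : G) - (s * r⁻¹) • (⟨x, hxG⟩ : G) ∈ F' :=
    (Submodule.Quotient.eq F').mp hmk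
  have h3 : g - (s * r⁻¹) • x ∈ F := h2
  have hgeq : g = (g - (s * r⁻¹) • x) + (s * r⁻¹) • x := by abel
  rw [hgeq]
  exact Submodule.add_mem _ (Submodule.mem_sup_left h3)
    (Submodule.mem_sup_right (Submodule.smul_mem _ _ (Submodule.mem_span_singleton_self x)))

end Aux
section Flag
variable {V : Type*} [AddCommGroup V] [Module ℂ V]
variable {B : V →ₗ[ℂ] V →ₗ[ℂ] ℂ} {C : Set (Submodule ℂ V)}

lemma chain_total (hch : IsChain (· ≤ ·) C) {F G : Submodule ℂ V}
    (hF : F ∈ C) (hG : G ∈ C) : F ≤ G ∨ G ≤ F := by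
  by_cases h : F = G
  · exact Or.inl h.le
  · exact hch hF hG h

/-- If `x ∈ G \ F` for an immediate pair `(F,G)` and `x ∈ H ∈ C` then `G ≤ H`. -/
lemma pair_le_of_mem (hch : IsChain (· ≤ ·) C) {F G H : Submodule ℂ V}
    (hp : ImmPair C F G) {x : V} (hxG : x ∈ G) (hxF : x ∉ F)
    (hH : H ∈ C) (hxH : x ∈ H) : G ≤ H := by
  obtain ⟨hFC, hGC, hlt, himm⟩ := hp
  rcases chain_total hch hGC hH with h | h
  · exact h
  · -- H ≤ G
    rcases eq_or_lt_of_le h with rfl | hHG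
    · exact le_rfl
    · rcases chain_total hch hH hFC with h2 | h2
      · exact absurd (h2 hxH) hxF
      · rcases eq_or_lt_of_le h2 with rfl | hFH
        · exact absurd hxH hxF
        · exact absurd ⟨hFH, hHG⟩ (himm H hH)

/-- If `x ∈ G \ F` for an immediate pair `(F,G)` and `x ∉ H ∈ C` then `H ≤ F`. -/
lemma le_pair_of_not_mem (hch : IsChain (· ≤ ·) C) {F G H : Submodule ℂ V}
    (hp : ImmPair C F G) {x : V} (hxG : x ∈ G) (hxF : x ∉ F)
    (hH : H ∈ C) (hxH : x ∉ H) : H ≤ F := by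
  obtain ⟨hFC, hGC, hlt, himm⟩ := hp
  rcases chain_total hch hH hFC with h | h
  · exact h
  · -- F ≤ H
    rcases chain_total hch hGC hH with h2 | h2
    · exact absurd (h2 hxG) hxH
    · rcases eq_or_lt_of_le h2 with rfl | hHG
      · exact absurd hxG hxH
      · rcases eq_or_lt_of_le h with rfl | hFH
        · exact le_rfl
        · exact absurd ⟨hFH, hHG⟩ (himm H hH)

end Flag
section Core
variable {V : Type*} [AddCommGroup V] [Module ℂ V]
variable {B : V →ₗ[ℂ] V →ₗ[ℂ] ℂ} {C : Set (Submodule ℂ V)}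

/-- Core lemma: if `U` is stable under `St_C`, `x ∈ U`, `z ∈ G_z \ F_z` for an
immediate pair, and `x ∉ (F_z)^⊥⊥`, then `z ∈ U`. -/
lemma core_mem (hAlt : ∀ x y : V, B x y = - B y x) (hch : IsChain (· ≤ ·) C)
    (hiso : ∀ u ∈ sSup C, ∀ v ∈ sSup C, B u v = 0)
    {U : Submodule ℂ V} (hstab : ∀ f ∈ skewStab B C, ∀ u ∈ U, f u ∈ U)
    (hUM : U ≤ sSup C)
    {x z : V} (hxU : x ∈ U) {Fz Gz : Submodule ℂ V} (hp : ImmPair C Fz Gz)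
    (hz : z ∈ Gz) (hzF : z ∉ Fz)
    (hxnp : x ∉ perp B (perp B Fz)) : z ∈ U := by
  have hax : ∃ a ∈ perp B Fz, B a x ≠ 0 := by
    by_contra h
    push_neg at h
    exact hxnp (fun a ha => h a ha)
  obtain ⟨a, ha, hax⟩ := hax
  have hzM : z ∈ sSup C := le_sSup hp.2.1 hz
  have hfC : sym2Map B a z ∈ skewStab B C := by
    refine ⟨sym2Map_mem B hAlt a z, ?_⟩
    intro H hH u hu
    have huM : u ∈ sSup C := le_sSup hH hu
    rw [sym2Map_apply, hiso u huM z hzM, zero_smul, add_zero]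
    by_cases hzH : z ∈ H
    · exact Submodule.smul_mem _ _ hzH
    · have hle := le_pair_of_not_mem hch hp hz hzF hH hzH
      rw [ha u (hle hu), zero_smul]
      exact zero_mem _
  have hfx := hstab _ hfC x hxU
  rw [sym2Map_apply, hiso x (hUM hxU) z hzM, zero_smul, add_zero] at hfx
  have hBxa : B x a ≠ 0 := by rw [hAlt x a, neg_ne_zero]; exact hax
  have hzz : z = (B x a)⁻¹ • (B x a • z) := by
    rw [smul_smul, inv_mul_cancel₀ hBxa, one_smul]
  rw [hzz]
  exact Submodule.smul_mem _ _ hfx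

/-- Lemma A(b): a stable subspace `U` is contained in `G_y` for any `y ∉ U`. -/
lemma stable_le_G (hAlt : ∀ x y : V, B x y = - B y x)
    (hC : IsMaxClosedIsoFlag B C)
    {U : Submodule ℂ V} (hstab : ∀ f ∈ skewStab B C, ∀ u ∈ U, f u ∈ U)
    (hUM : U ≤ sSup C)
    {y : V} {Fy Gy : Submodule ℂ V} (hp : ImmPair C Fy Gy)
    (hy : y ∈ Gy) (hyF : y ∉ Fy) (hyU : y ∉ U) : U ≤ Gy := by
  obtain ⟨h1, hch, h3, h4, h5, h6, h7a, h7b⟩ := hC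
  have hiso : ∀ u ∈ sSup C, ∀ v ∈ sSup C, B u v = 0 := fun u hu v hv => (h7a hv) u hu
  intro x hx
  by_contra hxG
  have hple : perp B (perp B Fy) ≤ Gy := by
    rcases (h5 Fy Gy hp).2 with h | h
    · rw [h]; exact hp.2.2.1.le
    · rw [h]
  exact hyU (core_mem hAlt hch hiso hstab hUM hx hp hy hyF (fun h => hxG (hple h)))

/-- Lemma A(a): a stable subspace `U` contains `F_x` for any `x ∈ U` in `G_x \ F_x`. -/
lemma stable_F_le (hAlt : ∀ x y : V, B x y = - B y x)
    (hC : IsMaxClosedIsoFlag B C)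
    {U : Submodule ℂ V} (hstab : ∀ f ∈ skewStab B C, ∀ u ∈ U, f u ∈ U)
    (hUM : U ≤ sSup C)
    {x : V} {F G : Submodule ℂ V} (hp : ImmPair C F G)
    (hxG : x ∈ G) (hxF : x ∉ F) (hxU : x ∈ U) : F ≤ U := by
  obtain ⟨h1, hch, h3, h4, h5, h6, h7a, h7b⟩ := hC
  have hiso : ∀ u ∈ sSup C, ∀ v ∈ sSup C, B u v = 0 := fun u hu v hv => (h7a hv) u hu
  intro z hz
  by_cases hz0 : z = 0
  · exact hz0 ▸ U.zero_mem
  obtain ⟨Fz, Gz, hpz, hzG, hzF⟩ := h4 z hz0 ⟨F, hp.1, hz⟩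
  have hGzF : Gz ≤ F := pair_le_of_mem hch hpz hzG hzF hp.1 hz
  have hple : perp B (perp B Fz) ≤ F := by
    rcases (h5 Fz Gz hpz).2 with h | h
    · rw [h]; exact hpz.2.2.1.le.trans hGzF
    · rw [h]; exact hGzF
  exact core_mem hAlt hch hiso hstab hUM hxU hpz hzG hzF (fun h => hxF (hple h))

end Core
section Main
variable {V : Type*} [AddCommGroup V] [Module ℂ V]
variable {B : V →ₗ[ℂ] V →ₗ[ℂ] ℂ} {C D : Set (Submodule ℂ V)}

lemma Bself_zero (hAlt : ∀ x y : V, B x y = - B y x) (m : V) : B m m = 0 := by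
  have h2 : (2 : ℂ) * B m m = 0 := by linear_combination hAlt m m
  exact (mul_eq_zero.mp h2).resolve_left two_ne_zero

/-- Lemma 0: the unions of the two flags coincide. -/
lemma sSup_flag_eq (hAlt : ∀ x y : V, B x y = - B y x)
    (hC : IsMaxClosedIsoFlag B C) (hD : IsMaxClosedIsoFlag B D)
    (hsub : skewStab B C ⊆ skewStab B D) : sSup C = sSup D := by
  obtain ⟨c1, cch, c3, c4, c5, c6, c7a, c7b⟩ := id hC
  obtain ⟨d1, dch, d3, d4, d5, d6, d7a, d7b⟩ := id hD
  have hisoC : ∀ u ∈ sSup C, ∀ v ∈ sSup C, B u v = 0 := fun u hu v hv => (c7a hv) u hu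
  have hisoD : ∀ u ∈ sSup D, ∀ v ∈ sSup D, B u v = 0 := fun u hu v hv => (d7a hv) u hu
  have h1 : sSup C ≤ sSup D := by
    intro m hm
    have hfC : sym2Map B m m ∈ skewStab B C := by
      refine ⟨sym2Map_mem B hAlt m m, ?_⟩
      intro H hH u hu
      rw [sym2Map_apply, hisoC u (le_sSup hH hu) m hm, zero_smul, add_zero]
      exact zero_mem _
    have hfD := hsub hfC
    by_cases hex : ∃ x ∈ sSup D, B x m ≠ 0
    · obtain ⟨x, hx, hBxm⟩ := hex
      have hx0 : x ≠ 0 := by rintro rfl; simp at hBxm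
      obtain ⟨H, hH, hxH⟩ := mem_chain_sSup dch hx hx0
      have hmem := hfD.2 H hH x hxH
      rw [sym2Map_apply] at hmem
      have h2 : (B x m + B x m) • m ∈ H := by rw [add_smul]; exact hmem
      have hne : B x m + B x m ≠ 0 := by
        intro h
        rw [← two_mul] at h
        exact hBxm ((mul_eq_zero.mp h).resolve_left two_ne_zero)
      have hmH : m ∈ H := by
        have := Submodule.smul_mem H (B x m + B x m)⁻¹ h2
        rwa [smul_smul, inv_mul_cancel₀ hne, one_smul] at this
      exact le_sSup hH hmH
    · push_neg at hex
      set P := sSup D ⊔ Submodule.span ℂ {m} with hP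
      have hPiso : P ≤ perp B P := by
        intro q hq
        rw [mem_perp]
        intro p hp
        obtain ⟨d, hd, e, he, rfl⟩ := Submodule.mem_sup.mp hp
        obtain ⟨c, rfl⟩ := Submodule.mem_span_singleton.mp he
        obtain ⟨d', hd', e', he', rfl⟩ := Submodule.mem_sup.mp hq
        obtain ⟨c', rfl⟩ := Submodule.mem_span_singleton.mp he'
        have h1 : B d d' = 0 := hisoD d hd d' hd'
        have h2 : B d m = 0 := hex d hd
        have h3 : B m d' = 0 := by rw [hAlt, hex d' hd', neg_zero]
        have h4 : B m m = 0 := Bself_zero hAlt m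
        simp [map_add, map_smul, h1, h2, h3, h4]
      have hPeq : P = sSup D := d7b P hPiso le_sup_left
      exact hPeq ▸ Submodule.mem_sup_right (Submodule.mem_span_singleton_self m)
  have h2 := c7b (sSup D) d7a h1
  exact h2.symm

/-- Lemma B: if `x ∈ W ∈ D` and `(F,G)` is the `C`-pair of `x`, then `G ≤ W`. -/
lemma lemB (hAlt : ∀ x y : V, B x y = - B y x)
    (hC : IsMaxClosedIsoFlag B C) (hD : IsMaxClosedIsoFlag B D)
    (hMeq : sSup C = sSup D) (hsub : skewStab B C ⊆ skewStab B D)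
    {W : Submodule ℂ V} (hW : W ∈ D) {x : V} {F G : Submodule ℂ V}
    (hp : ImmPair C F G) (hxG : x ∈ G) (hxF : x ∉ F) (hxW : x ∈ W) : G ≤ W := by
  obtain ⟨c1, cch, c3, c4, c5, c6, c7a, c7b⟩ := id hC
  obtain ⟨d1, dch, d3, d4, d5, d6, d7a, d7b⟩ := id hD
  have hstab : ∀ U ∈ D, ∀ f ∈ skewStab B C, ∀ u ∈ U, f u ∈ U :=
    fun U hU f hf => (hsub hf).2 U hU
  have hUM : ∀ U ∈ D, U ≤ sSup C := fun U hU => hMeq ▸ le_sSup hU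
  have hFW : F ≤ W := stable_F_le hAlt hC (hstab W hW) (hUM W hW) hp hxG hxF hxW
  intro g hgG
  by_contra hgW
  have hg0 : g ≠ 0 := fun h => hgW (h ▸ W.zero_mem)
  obtain ⟨Fg, Gg, hpg, hgGg, hgFg⟩ := c4 g hg0 ⟨G, hp.2.1, hgG⟩
  have hGgG : Gg ≤ G := pair_le_of_mem cch hpg hgGg hgFg hp.2.1 hgG
  have hWGg : W ≤ Gg := stable_le_G hAlt hC (hstab W hW) (hUM W hW) hpg hgGg hgFg hgW
  have hWG : W < G := lt_of_le_of_ne (hWGg.trans hGgG) (by rintro rfl; exact hgW hgG)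
  have hx0 : x ≠ 0 := fun h => hxF (h ▸ F.zero_mem)
  obtain ⟨F'', G'', hp'', hxG'', hxF''⟩ := d4 x hx0 ⟨W, hW, hxW⟩
  have hG''W : G'' ≤ W := pair_le_of_mem dch hp'' hxG'' hxF'' hW hxW
  have hG''cl : perp B (perp B G'') = G'' := (d5 F'' G'' hp'').1
  rcases (c5 F G hp).2 with hgood | hbad
  · have hrk := c6 F G hp hgood
    have hle : G ≤ W := (rank_one_span hrk hxG hxF).trans
      (sup_le hFW (Submodule.span_le.mpr (by simpa using hxW)))
    exact hWG.not_ge hle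
  · have hFG'' : F ≤ G'' :=
      stable_F_le hAlt hC (hstab G'' hp''.2.1) (hUM G'' hp''.2.1) hp hxG hxF hxG''
    have hle : G ≤ G'' := by
      rw [← hbad, ← hG''cl]
      exact perp_mono (perp_mono hFG'')
    exact hWG.not_ge (hle.trans hG''W)

end Main
section Subsets
variable {V : Type*} [AddCommGroup V] [Module ℂ V]
variable {B : V →ₗ[ℂ] V →ₗ[ℂ] ℂ} {C D : Set (Submodule ℂ V)}

/-- `D ⊆ C`. -/
lemma flag_subset₁ (hAlt : ∀ x y : V, B x y = - B y x)
    (hC : IsMaxClosedIsoFlag B C) (hD : IsMaxClosedIsoFlag B D)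
    (hsub : skewStab B C ⊆ skewStab B D) : D ⊆ C := by
  obtain ⟨c1, cch, c3, c4, c5, c6, c7a, c7b⟩ := id hC
  obtain ⟨d1, dch, d3, d4, d5, d6, d7a, d7b⟩ := id hD
  have hMeq : sSup C = sSup D := sSup_flag_eq hAlt hC hD hsub
  have hstab : ∀ U ∈ D, ∀ f ∈ skewStab B C, ∀ u ∈ U, f u ∈ U :=
    fun U hU f hf => (hsub hf).2 U hU
  have hUM : ∀ U ∈ D, U ≤ sSup C := fun U hU => hMeq ▸ le_sSup hU
  have genfact : ∀ U ∈ D, ∀ y : V, y ∉ U → ∀ Fy Gy : Submodule ℂ V,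
      ImmPair C Fy Gy → y ∈ Gy → y ∉ Fy → U ≤ Fy := by
    intro U hU y hyU Fy Gy hpy hyG hyF x hx
    by_contra hxF
    have hxGy : x ∈ Gy := stable_le_G hAlt hC (hstab U hU) (hUM U hU) hpy hyG hyF hyU hx
    exact hyU ((lemB hAlt hC hD hMeq hsub hU hpy hxGy hxF hx) hyG)
  intro W hW
  have hWM : W ≤ sSup C := hUM W hW
  rcases eq_or_lt_of_le hWM with heq | hlt
  · -- W = sSup C
    rcases d3 W hW with ⟨P, hpP⟩ | ⟨Q, hpQ⟩
    · obtain ⟨y, hyW, hyP⟩ := SetLike.exists_of_lt hpP.2.2.1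
      have hy0 : y ≠ 0 := fun h => hyP (h ▸ P.zero_mem)
      obtain ⟨Fy, Gy, hpy, hyG, hyF⟩ :=
        c4 y hy0 (mem_chain_sSup cch (heq ▸ hyW) hy0)
      have hPG : P ≤ Gy := stable_le_G hAlt hC (hstab P hpP.1) (hUM P hpP.1) hpy hyG hyF hyP
      have hGyW : Gy ≤ W := heq ▸ le_sSup hpy.2.1
      rcases (d5 P W hpP).2 with hgood | hbad
      · have hrk := d6 P W hpP hgood
        have hWle : W ≤ P ⊔ Submodule.span ℂ {y} := rank_one_span hrk hyW hyP
        have hGW : Gy = W := le_antisymm hGyW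
          (hWle.trans (sup_le hPG (Submodule.span_le.mpr (by simpa using hyG))))
        exact hGW ▸ hpy.2.1
      · have hGycl := (c5 Fy Gy hpy).1
        have hWGy : W ≤ Gy := by
          rw [← hbad, ← hGycl]
          exact perp_mono (perp_mono hPG)
        have hGW : Gy = W := le_antisymm hGyW hWGy
        exact hGW ▸ hpy.2.1
    · have hQ : Q ≤ W := heq ▸ (hMeq ▸ le_sSup hpQ.2.1)
      exact absurd hQ hpQ.2.2.1.not_ge
  · -- W < sSup C
    rcases d3 W hW with ⟨F', hpF'⟩ | ⟨G', hpG'⟩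
    · -- predecessor pair (F', W) in D
      obtain ⟨x, hxW, hxF'⟩ := SetLike.exists_of_lt hpF'.2.2.1
      have hx0 : x ≠ 0 := fun h => hxF' (h ▸ F'.zero_mem)
      obtain ⟨Fx, Gx, hpx, hxG, hxF⟩ :=
        c4 x hx0 (mem_chain_sSup cch (hWM hxW) hx0)
      have hF'Gx : F' ≤ Gx :=
        stable_le_G hAlt hC (hstab F' hpF'.1) (hUM F' hpF'.1) hpx hxG hxF hxF'
      have hGxW : Gx ≤ W := lemB hAlt hC hD hMeq hsub hW hpx hxG hxF hxW
      rcases (d5 F' W hpF').2 with hgood | hbad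
      · have hrk := d6 F' W hpF' hgood
        have hWle : W ≤ F' ⊔ Submodule.span ℂ {x} := rank_one_span hrk hxW hxF'
        have hWG : W = Gx := le_antisymm
          (hWle.trans (sup_le hF'Gx (Submodule.span_le.mpr (by simpa using hxG)))) hGxW
        exact hWG ▸ hpx.2.1
      · have hGxcl := (c5 Fx Gx hpx).1
        have hWGx : W ≤ Gx := by
          rw [← hbad, ← hGxcl]
          exact perp_mono (perp_mono hF'Gx)
        have hWG : W = Gx := le_antisymm hWGx hGxW
        exact hWG ▸ hpx.2.1
    · -- successor pair (W, G') in D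
      obtain ⟨y, hyG', hyW⟩ := SetLike.exists_of_lt hpG'.2.2.1
      have hy0 : y ≠ 0 := fun h => hyW (h ▸ W.zero_mem)
      have hyM : y ∈ sSup C := (hUM G' hpG'.2.1) hyG'
      obtain ⟨Fy, Gy, hpy, hyG, hyF⟩ := c4 y hy0 (mem_chain_sSup cch hyM hy0)
      have hWFy : W ≤ Fy := genfact W hW y hyW Fy Gy hpy hyG hyF
      have hGyG' : Gy ≤ G' := lemB hAlt hC hD hMeq hsub hpG'.2.1 hpy hyG hyF hyG'
      by_cases hWF : W = Fy
      · exact hWF ▸ hpy.1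
      exfalso
      have hWFlt : W < Fy := lt_of_le_of_ne hWFy hWF
      obtain ⟨u, huFy, huW⟩ := SetLike.exists_of_lt hWFlt
      rcases (d5 W G' hpG').2 with hgood | hbad
      · have hrk := d6 W G' hpG' hgood
        have huG' : u ∈ G' := (hGyG' (hpy.2.2.1.le huFy))
        have hG'Fy : G' ≤ Fy := (rank_one_span hrk huG' huW).trans
          (sup_le hWFy (Submodule.span_le.mpr (by simpa using huFy)))
        exact hpy.2.2.1.not_ge (hGyG'.trans hG'Fy)
      · have hu0 : u ≠ 0 := fun h => huW (h ▸ W.zero_mem)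
        obtain ⟨F2, G2, hp2, huG2, huF2⟩ :=
          c4 u hu0 ⟨Fy, hpy.1, huFy⟩
        have hWF2 : W ≤ F2 := genfact W hW u huW F2 G2 hp2 huG2 huF2
        have hG2Fy : G2 ≤ Fy := pair_le_of_mem cch hp2 huG2 huF2 hpy.1 huFy
        have hppF2 : perp B (perp B F2) ≤ G2 := by
          rcases (c5 F2 G2 hp2).2 with h | h
          · rw [h]; exact hp2.2.2.1.le
          · rw [h]
        have hG'Fy : G' ≤ Fy := by
          rw [← hbad]
          exact ((perp_mono (perp_mono hWF2)).trans hppF2).trans hG2Fy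
        exact hpy.2.2.1.not_ge (hGyG'.trans hG'Fy)

/-- `C ⊆ D`. -/
lemma flag_subset₂ (hAlt : ∀ x y : V, B x y = - B y x)
    (hC : IsMaxClosedIsoFlag B C) (hD : IsMaxClosedIsoFlag B D)
    (hsub : skewStab B C ⊆ skewStab B D) (hDC : D ⊆ C) : C ⊆ D := by
  obtain ⟨c1, cch, c3, c4, c5, c6, c7a, c7b⟩ := id hC
  obtain ⟨d1, dch, d3, d4, d5, d6, d7a, d7b⟩ := id hD
  have hMeq : sSup C = sSup D := sSup_flag_eq hAlt hC hD hsub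
  intro F hF
  by_contra hFD
  rcases c3 F hF with ⟨E, hpE⟩ | ⟨G, hpG⟩
  · -- predecessor pair (E, F) in C
    obtain ⟨x, hxF, hxE⟩ := SetLike.exists_of_lt hpE.2.2.1
    have hx0 : x ≠ 0 := fun h => hxE (h ▸ E.zero_mem)
    have hxMD : x ∈ sSup D := hMeq ▸ le_sSup hF hxF
    obtain ⟨F', G', hp', hxG', hxF'⟩ := d4 x hx0 (mem_chain_sSup dch hxMD hx0)
    have hF'E : F' ≤ E := le_pair_of_not_mem cch hpE hxF hxE (hDC hp'.1) hxF'
    have hFG' : F ≤ G' := pair_le_of_mem cch hpE hxF hxE (hDC hp'.2.1) hxG'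
    have hFlt : F < G' := lt_of_le_of_ne hFG' (fun h => hFD (h ▸ hp'.2.1))
    rcases (d5 F' G' hp').2 with hgood | hbad
    · have hrk := d6 F' G' hp' hgood
      have hG'F : G' ≤ F := (rank_one_span hrk hxG' hxF').trans
        (sup_le (hF'E.trans hpE.2.2.1.le) (Submodule.span_le.mpr (by simpa using hxF)))
      exact hFlt.not_ge hG'F
    · have hppE : perp B (perp B E) ≤ F := by
        rcases (c5 E F hpE).2 with h | h
        · rw [h]; exact hpE.2.2.1.le
        · rw [h]
      have hG'F : G' ≤ F := by
        rw [← hbad]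
        exact (perp_mono (perp_mono hF'E)).trans hppE
      exact hFlt.not_ge hG'F
  · -- successor pair (F, G) in C
    obtain ⟨x, hxG, hxF⟩ := SetLike.exists_of_lt hpG.2.2.1
    have hx0 : x ≠ 0 := fun h => hxF (h ▸ F.zero_mem)
    have hxMD : x ∈ sSup D := hMeq ▸ le_sSup hpG.2.1 hxG
    obtain ⟨F', G', hp', hxG', hxF'⟩ := d4 x hx0 (mem_chain_sSup dch hxMD hx0)
    have hF'F : F' ≤ F := le_pair_of_not_mem cch hpG hxG hxF (hDC hp'.1) hxF'
    have hGG' : G ≤ G' := pair_le_of_mem cch hpG hxG hxF (hDC hp'.2.1) hxG'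
    have hF'lt : F' < F := lt_of_le_of_ne hF'F (fun h => hFD (h ▸ hp'.1))
    obtain ⟨z, hzF, hzF'⟩ := SetLike.exists_of_lt hF'lt
    have hz0 : z ≠ 0 := fun h => hzF' (h ▸ F'.zero_mem)
    rcases (d5 F' G' hp').2 with hgood | hbad
    · have hrk := d6 F' G' hp' hgood
      have hzG' : z ∈ G' := hGG' (hpG.2.2.1.le hzF)
      have hG'F : G' ≤ F := (rank_one_span hrk hzG' hzF').trans
        (sup_le hF'F (Submodule.span_le.mpr (by simpa using hzF)))
      exact hpG.2.2.1.not_ge (hGG'.trans hG'F)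
    · obtain ⟨Fz, Gz, hpz, hzGz, hzFz⟩ := c4 z hz0 ⟨F, hF, hzF⟩
      have hGzF : Gz ≤ F := pair_le_of_mem cch hpz hzGz hzFz hF hzF
      have hF'Fz : F' ≤ Fz := le_pair_of_not_mem cch hpz hzGz hzFz (hDC hp'.1) hzF'
      have hppFz : perp B (perp B Fz) ≤ Gz := by
        rcases (c5 Fz Gz hpz).2 with h | h
        · rw [h]; exact hpz.2.2.1.le
        · rw [h]
      have hG'F : G' ≤ F := by
        rw [← hbad]
        exact ((perp_mono (perp_mono hF'Fz)).trans hppFz).trans hGzF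
      exact hpG.2.2.1.not_ge (hGG'.trans hG'F)

end Subsets
/-- if `𝔽` and `𝔊` are maximal closed isotropic generalized
flags in `V` (symplectic form) with `St_𝔽 ⊆ St_𝔊` in `𝔰𝔭(V)`, then
`⋃_{F∈𝔽} F = ⋃_{G∈𝔊} G`; in fact `𝔽 = 𝔊`, so the map `𝔽 ↦ St_𝔽` from maximal
closed isotropic generalized flags in `V` to Borel subalgebras of `𝔰𝔭(V)` is
injective. -/
theorem sp_isoFlag_eq_of_stab_le
    {V : Type*} [AddCommGroup V] [Module ℂ V]
    (hV : Module.rank ℂ V ≤ Cardinal.aleph0)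
    (B : V →ₗ[ℂ] V →ₗ[ℂ] ℂ)
    (hB : ∀ x : V, (∀ y : V, B x y = 0) → x = 0)
    (hAlt : ∀ x y : V, B x y = - B y x) :
    (∀ C D : Set (Submodule ℂ V),
      IsMaxClosedIsoFlag B C → IsMaxClosedIsoFlag B D →
      skewStab B C ⊆ skewStab B D →
      sSup C = sSup D ∧ C = D) ∧
    -- injectivity of the map 𝔽 ↦ St_𝔽
    (∀ C D : Set (Submodule ℂ V),
      IsMaxClosedIsoFlag B C → IsMaxClosedIsoFlag B D →
      skewStab B C = skewStab B D → C = D) := by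
  have main : ∀ C D : Set (Submodule ℂ V),
      IsMaxClosedIsoFlag B C → IsMaxClosedIsoFlag B D →
      skewStab B C ⊆ skewStab B D → sSup C = sSup D ∧ C = D := by
    intro C D hC hD hsub
    have h1 := flag_subset₁ hAlt hC hD hsub
    have h2 := flag_subset₂ hAlt hC hD hsub h1
    exact ⟨sSup_flag_eq hAlt hC hD hsub, Set.Subset.antisymm h2 h1⟩
  exact ⟨main, fun C D hC hD heq => (main C D hC hD heq.subset).2⟩
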